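/- Let H > 1 and 2HK ≤ 1 with K > 0, and let R_{H,K}(s,t) = 2^{−K}((t^{2H} + s^{2H})^K − |t−s|^{2HK}). Then for all s,t ≥ 0, the incremental variance V(s,t) := R_{H,K}(t,t) + R_{H,K}(s,s) − 2R_{H,K}(s,t) satisfies the quasihelix bounds 2^{−K}·|t−s|^{2HK} ≤ V(s,t) ≤ 2^{1−K}·|t−s|^{2HK}. -/

import Mathlib

open Real Set

lemma midpt_convex {c : ℝ} (hc : 1 ≤ c) {a b : ℝ} (ha : 0 ≤ a) (hb : 0 ≤ b) :
    ((a + b) / 2) ^ c ≤ (a ^ c + b ^ c) / 2 := by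
  have h := (convexOn_rpow hc).2 (mem_Ici.2 ha) (mem_Ici.2 hb)
    (by norm_num : (0:ℝ) ≤ 1/2) (by norm_num : (0:ℝ) ≤ 1/2) (by norm_num)
  simp only [smul_eq_mul] at h
  calc ((a+b)/2) ^ c = (1/2*a + 1/2*b) ^ c := by ring_nf
    _ ≤ 1/2*a^c + 1/2*b^c := h
    _ = (a^c+b^c)/2 := by ring

lemma midpt_convex_neg {c : ℝ} (hc : c ≤ 0) {a b : ℝ} (ha : 0 < a) (hb : 0 < b) :
    ((a + b) / 2) ^ c ≤ (a ^ c + b ^ c) / 2 := by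
  have hab : Real.sqrt (a*b) ≤ (a+b)/2 := by
    rw [show (a+b)/2 = Real.sqrt (((a+b)/2)^2) from (Real.sqrt_sq (by positivity)).symm]
    exact Real.sqrt_le_sqrt (by nlinarith [sq_nonneg (a-b)])
  have hs : 0 < Real.sqrt (a*b) := Real.sqrt_pos.2 (by positivity)
  have h1 : ((a+b)/2)^c ≤ (Real.sqrt (a*b))^c := Real.rpow_le_rpow_of_nonpos hs hab hc
  have h2 : (Real.sqrt (a*b))^c = a^(c/2) * b^(c/2) := by
    rw [Real.sqrt_eq_rpow, ← Real.rpow_mul (by positivity),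
      Real.mul_rpow ha.le hb.le]
    ring_nf
  have h3 : a^(c/2) * b^(c/2) ≤ (a^c + b^c)/2 := by
    have e1 : (a^(c/2))^2 = a^c := by
      rw [← Real.rpow_natCast (a^(c/2)) 2, ← Real.rpow_mul ha.le]; norm_num
    have e2 : (b^(c/2))^2 = b^c := by
      rw [← Real.rpow_natCast (b^(c/2)) 2, ← Real.rpow_mul hb.le]; norm_num
    nlinarith [sq_nonneg (a^(c/2) - b^(c/2))]
  calc ((a+b)/2)^c ≤ (Real.sqrt (a*b))^c := h1
    _ = a^(c/2) * b^(c/2) := h2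
    _ ≤ (a^c + b^c)/2 := h3

lemma key_ineq {p K : ℝ} (hp : 2 ≤ p) (hK0 : 0 < K) (hα : p * K ≤ 1)
    {a b : ℝ} (hb : 0 < b) (hba : b ≤ a) :
    ((a ^ p + b ^ p) / 2) ^ (K - 1) * (a ^ (p - 1) + b ^ (p - 1))
      ≤ a ^ (p * K - 1) + b ^ (p * K - 1) := by
  have ha : 0 < a := lt_of_lt_of_le hb hba
  have hp0 : (0:ℝ) < p := by linarith
  have hp1 : (0:ℝ) < p - 1 := by linarith
  set Mp := (a ^ p + b ^ p) / 2 with hMpdef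
  have hMp : 0 < Mp := by
    have := Real.rpow_pos_of_pos ha p
    have := Real.rpow_pos_of_pos hb p
    positivity
  have step1 : a ^ (p-1) + b ^ (p-1) ≤ 2 * Mp ^ ((p-1)/p) := by
    have h := midpt_convex (c := p/(p-1))
      (by rw [le_div_iff₀ hp1]; linarith)
      (Real.rpow_pos_of_pos ha (p-1)).le (Real.rpow_pos_of_pos hb (p-1)).le
    rw [← Real.rpow_mul ha.le, ← Real.rpow_mul hb.le,
      show (p-1) * (p/(p-1)) = p by field_simp] at h
    have h2 := Real.rpow_le_rpow (by positivity) h (by positivity : (0:ℝ) ≤ (p-1)/p)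
    rw [← Real.rpow_mul (by positivity), show (p/(p-1)) * ((p-1)/p) = 1 by field_simp,
      Real.rpow_one] at h2
    linarith
  have he : (p*K-1)/p ≤ 0 := div_nonpos_of_nonpos_of_nonneg (by linarith) hp0.le
  have hM1 : ((a+b)/2) ^ p ≤ Mp := midpt_convex (by linarith) ha.le hb.le
  have step3 : 2 * Mp ^ ((p*K-1)/p) ≤ a ^ (p*K-1) + b ^ (p*K-1) := by
    have h1 : Mp ^ ((p*K-1)/p) ≤ (((a+b)/2) ^ p) ^ ((p*K-1)/p) :=
      Real.rpow_le_rpow_of_nonpos (Real.rpow_pos_of_pos (by positivity) p) hM1 he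
    rw [← Real.rpow_mul (by positivity), show p * ((p*K-1)/p) = p*K-1 by field_simp] at h1
    have h2 := midpt_convex_neg (c := p*K-1) (by linarith) ha hb
    linarith
  have hMK : 0 < Mp ^ (K-1) := Real.rpow_pos_of_pos hMp _
  calc Mp ^ (K-1) * (a ^ (p-1) + b ^ (p-1))
      ≤ Mp ^ (K-1) * (2 * Mp ^ ((p-1)/p)) := by
        exact mul_le_mul_of_nonneg_left step1 hMK.le
    _ = 2 * Mp ^ ((p*K-1)/p) := by
        rw [show Mp ^ (K-1) * (2 * Mp ^ ((p-1)/p)) = 2 * (Mp ^ (K-1) * Mp ^ ((p-1)/p)) by ring,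
          ← Real.rpow_add hMp, show K - 1 + (p-1)/p = (p*K-1)/p by field_simp; ring]
    _ ≤ a ^ (p*K-1) + b ^ (p*K-1) := step3

lemma main_lower {p K : ℝ} (hp : 2 ≤ p) (hK0 : 0 < K) (hα : p * K ≤ 1)
    {v : ℝ} (hv : 0 ≤ v) {s : ℝ} (hs : 0 ≤ s) :
    (2:ℝ) ^ (1-K) * ((s+v) ^ p + s ^ p) ^ K
      ≤ (s+v) ^ (p*K) + s ^ (p*K) + (2:ℝ) ^ (-K) * v ^ (p*K) := by
  have hp0 : (0:ℝ) < p := by linarith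
  have hK1 : K ≤ 1 := by nlinarith
  have hα0 : 0 < p * K := by positivity
  rcases eq_or_lt_of_le hv with rfl | hv
  · rw [add_zero, show s ^ p + s ^ p = 2 * s ^ p by ring,
      Real.mul_rpow (by norm_num) (Real.rpow_nonneg hs p),
      ← Real.rpow_mul hs, Real.zero_rpow hα0.ne', mul_zero, add_zero,
      ← mul_assoc, ← Real.rpow_add two_pos]
    norm_num
    linarith [Real.rpow_nonneg hs (p*K)]
  set α := p * K with hαdef
  set G : ℝ → ℝ := fun x =>
    (x+v) ^ α + x ^ α + (2:ℝ) ^ (-K) * v ^ α - (2:ℝ) ^ (1-K) * ((x+v) ^ p + x ^ p) ^ K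
    with hGdef
  have hcont : ContinuousOn G (Ici 0) := by
    apply ContinuousOn.sub
    · apply ContinuousOn.add
      apply ContinuousOn.add
      · exact ((continuous_id.add continuous_const).rpow_const
          (fun x => Or.inr (by positivity))).continuousOn
      · exact (continuous_id.rpow_const (fun x => Or.inr (by positivity))).continuousOn
      · exact continuousOn_const
    · exact (continuous_const.mul
        (((((continuous_id.add continuous_const).rpow_const
            (fun x => Or.inr hp0.le))).add
          (continuous_id.rpow_const (fun x => Or.inr hp0.le))).rpow_const
          (fun x => Or.inr hK0.le))).continuousOn
  have hderiv : ∀ x ∈ Ioi (0:ℝ), HasDerivAt G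
      (α * (x+v) ^ (α-1) + α * x ^ (α-1)
        - (2:ℝ) ^ (1-K) * ((p * (x+v) ^ (p-1) + p * x ^ (p-1)) * K * ((x+v) ^ p + x ^ p) ^ (K-1))) x := by
    intro x hx
    have hx0 : (0:ℝ) < x := hx
    have hxv : (0:ℝ) < x + v := by linarith
    have d1 : HasDerivAt (fun y : ℝ => (y+v) ^ α) (α * (x+v) ^ (α-1)) x := by
      have := (Real.hasDerivAt_rpow_const (x := x+v) (p := α) (Or.inl hxv.ne')).comp x
        ((hasDerivAt_id x).add_const v)
      simpa [Function.comp_def] using this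
    have d2 : HasDerivAt (fun y : ℝ => y ^ α) (α * x ^ (α-1)) x :=
      Real.hasDerivAt_rpow_const (Or.inl hx0.ne')
    have dinner : HasDerivAt (fun y : ℝ => (y+v) ^ p + y ^ p)
        (p * (x+v) ^ (p-1) + p * x ^ (p-1)) x := by
      have i1 : HasDerivAt (fun y : ℝ => (y+v) ^ p) (p * (x+v) ^ (p-1)) x := by
        have := (Real.hasDerivAt_rpow_const (x := x+v) (p := p) (Or.inl hxv.ne')).comp x
          ((hasDerivAt_id x).add_const v)
        simpa [Function.comp_def] using this
      exact i1.add (Real.hasDerivAt_rpow_const (Or.inl hx0.ne'))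
    have hSpos : (0:ℝ) < (x+v) ^ p + x ^ p := by
      have := Real.rpow_pos_of_pos hxv p
      have := Real.rpow_pos_of_pos hx0 p
      positivity
    have douter : HasDerivAt (fun y : ℝ => ((y+v) ^ p + y ^ p) ^ K)
        ((p * (x+v) ^ (p-1) + p * x ^ (p-1)) * K * ((x+v) ^ p + x ^ p) ^ (K-1)) x :=
      dinner.rpow_const (Or.inl hSpos.ne')
    exact ((d1.add d2).add_const ((2:ℝ) ^ (-K) * v ^ α)).sub (douter.const_mul _)
  have hderiv_nonneg : ∀ x ∈ Ioi (0:ℝ),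
      0 ≤ α * (x+v) ^ (α-1) + α * x ^ (α-1)
        - (2:ℝ) ^ (1-K) * ((p * (x+v) ^ (p-1) + p * x ^ (p-1)) * K * ((x+v) ^ p + x ^ p) ^ (K-1)) := by
    intro x hx
    have hx0 : (0:ℝ) < x := hx
    have hxv : (0:ℝ) < x + v := by linarith
    have hS : (0:ℝ) < (x+v) ^ p + x ^ p := by
      have := Real.rpow_pos_of_pos hxv p
      have := Real.rpow_pos_of_pos hx0 p
      positivity
    have hkey := key_ineq hp hK0 hα hx0 (by linarith : x ≤ x + v)
    have hfac : (2:ℝ) ^ (1-K) * ((x+v) ^ p + x ^ p) ^ (K-1)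
        = (((x+v) ^ p + x ^ p) / 2) ^ (K-1) := by
      rw [Real.div_rpow hS.le (by norm_num), div_eq_mul_inv,
        ← Real.rpow_neg (by norm_num : (0:ℝ) ≤ 2), neg_sub]
      ring
    have expand : (2:ℝ) ^ (1-K) * ((p * (x+v) ^ (p-1) + p * x ^ (p-1)) * K * ((x+v) ^ p + x ^ p) ^ (K-1))
        = α * ((((x+v) ^ p + x ^ p) / 2) ^ (K-1) * ((x+v) ^ (p-1) + x ^ (p-1))) := by
      rw [← hfac]; ring
    rw [expand]
    have := mul_le_mul_of_nonneg_left hkey hα0.le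
    nlinarith [this]
  have hmono : MonotoneOn G (Ici 0) := by
    apply monotoneOn_of_deriv_nonneg (convex_Ici 0) hcont
    · intro x hx
      rw [interior_Ici] at hx
      exact ((hderiv x hx).differentiableAt.differentiableWithinAt)
    · intro x hx
      rw [interior_Ici] at hx
      rw [(hderiv x hx).deriv]
      exact hderiv_nonneg x hx
  have hG0 : 0 ≤ G 0 := by
    have : G 0 = (1 - (2:ℝ) ^ (-K)) * v ^ α := by
      simp only [hGdef, zero_add, Real.zero_rpow hα0.ne', Real.zero_rpow hp0.ne',
        add_zero]
      rw [← Real.rpow_mul hv.le, Real.rpow_sub two_pos, Real.rpow_one,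
        Real.rpow_neg (by norm_num : (0:ℝ) ≤ 2)]
      ring_nf
      rw [← hαdef]; ring
    rw [this]
    have h2 : (2:ℝ) ^ (-K) ≤ 1 := by
      rw [show (1:ℝ) = (2:ℝ) ^ (0:ℝ) by simp]
      exact Real.rpow_le_rpow_of_exponent_le (by norm_num) (by linarith)
    have := Real.rpow_nonneg hv.le α
    nlinarith
  have := hmono (self_mem_Ici) (mem_Ici.2 hs) hs
  have hGs : 0 ≤ G s := le_trans hG0 this
  simp only [hGdef] at hGs
  linarith

lemma upper_concave {K a b : ℝ} (hK0 : 0 < K) (hK1 : K ≤ 1) (ha : 0 ≤ a) (hb : 0 ≤ b) :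
    a ^ K + b ^ K ≤ (2:ℝ) ^ (1-K) * (a+b) ^ K := by
  have h := midpt_convex (c := 1/K) (by rw [le_div_iff₀ hK0]; linarith)
    (Real.rpow_nonneg ha K) (Real.rpow_nonneg hb K)
  rw [← Real.rpow_mul ha, ← Real.rpow_mul hb, show K * (1/K) = 1 by field_simp,
    Real.rpow_one, Real.rpow_one] at h
  have h2 := Real.rpow_le_rpow (by positivity) h hK0.le
  rw [← Real.rpow_mul (by positivity), show (1/K) * K = 1 by field_simp, Real.rpow_one] at h2
  have h3 : ((a+b)/2) ^ K = (2:ℝ)^(-K) * (a+b)^K := by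
    rw [Real.div_rpow (by linarith) (by norm_num), div_eq_mul_inv,
      ← Real.rpow_neg (by norm_num : (0:ℝ) ≤ 2)]
    ring
  have h4 : (2:ℝ) ^ (1-K) = 2 * (2:ℝ)^(-K) := by
    rw [show (1-K) = 1 + -K by ring, Real.rpow_add two_pos, Real.rpow_one]
  rw [h4]
  rw [h3] at h2
  linarith

/-- The bifractional Brownian motion covariance kernel. -/
noncomputable def Rbif (H K s t : ℝ) : ℝ :=
  (2 : ℝ) ^ (-K) * ((t ^ (2 * H) + s ^ (2 * H)) ^ K - |t - s| ^ (2 * H * K))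

/-- Quasihelix bounds for the incremental variance of bifractional Brownian
motion with `H > 1`, `0 < K`, `2HK ≤ 1`:
`2^{−K} |t−s|^{2HK} ≤ V(s,t) ≤ 2^{1−K} |t−s|^{2HK}` where
`V(s,t) = R(t,t) + R(s,s) − 2R(s,t)`. -/
theorem Rbif_quasihelix (H K : ℝ) (hH : 1 < H) (hK : 0 < K) (hHK : 2 * H * K ≤ 1)
    (s t : ℝ) (hs : 0 ≤ s) (ht : 0 ≤ t) :
    (2 : ℝ) ^ (-K) * |t - s| ^ (2 * H * K) ≤
        Rbif H K t t + Rbif H K s s - 2 * Rbif H K s t ∧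
      Rbif H K t t + Rbif H K s s - 2 * Rbif H K s t ≤
        (2 : ℝ) ^ (1 - K) * |t - s| ^ (2 * H * K) := by
  have hp : (2:ℝ) ≤ 2 * H := by linarith
  have hα0 : 0 < 2 * H * K := by positivity
  have hK1 : K ≤ 1 := by nlinarith
  -- diagonal values
  have diag : ∀ u : ℝ, 0 ≤ u → Rbif H K u u = u ^ (2 * H * K) := by
    intro u hu
    unfold Rbif
    rw [sub_self, abs_zero, Real.zero_rpow hα0.ne', sub_zero,
      show u ^ (2*H) + u ^ (2*H) = 2 * u ^ (2*H) by ring,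
      Real.mul_rpow (by norm_num) (Real.rpow_nonneg hu _),
      ← Real.rpow_mul hu, ← mul_assoc, ← Real.rpow_add two_pos, neg_add_cancel,
      Real.rpow_zero, one_mul, mul_assoc]
  have h4 : (2:ℝ) ^ (1-K) = 2 * (2:ℝ)^(-K) := by
    rw [show (1-K) = 1 + -K by ring, Real.rpow_add two_pos, Real.rpow_one]
  -- incremental variance formula
  have Vexpr : Rbif H K t t + Rbif H K s s - 2 * Rbif H K s t
      = t ^ (2*H*K) + s ^ (2*H*K) - (2:ℝ)^(1-K) * (t ^ (2*H) + s ^ (2*H)) ^ K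
        + (2:ℝ)^(1-K) * |t-s| ^ (2*H*K) := by
    rw [diag t ht, diag s hs]
    unfold Rbif
    rw [h4]; ring
  rw [Vexpr]
  set A := |t-s| ^ (2*H*K) with hA
  have hAnn : 0 ≤ A := Real.rpow_nonneg (abs_nonneg _) _
  have hEt : t ^ (2*H*K) = (t ^ (2*H)) ^ K := Real.rpow_mul ht _ _
  have hEs : s ^ (2*H*K) = (s ^ (2*H)) ^ K := Real.rpow_mul hs _ _
  constructor
  · -- lower bound
    have lowerW : (2:ℝ)^(1-K) * (t ^ (2*H) + s ^ (2*H)) ^ K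
        ≤ t ^ (2*H*K) + s ^ (2*H*K) + (2:ℝ)^(-K) * A := by
      rcases le_total s t with h | h
      · have := main_lower hp hK hHK (sub_nonneg.2 h) hs
        rw [show s + (t - s) = t by ring] at this
        rw [hA, abs_of_nonneg (sub_nonneg.2 h)]
        exact this
      · have := main_lower hp hK hHK (sub_nonneg.2 h) ht
        rw [show t + (s - t) = s by ring] at this
        rw [hA, abs_sub_comm, abs_of_nonneg (sub_nonneg.2 h),
          show t ^ (2*H) + s ^ (2*H) = s ^ (2*H) + t ^ (2*H) by ring]
        linarith
    rw [h4] at lowerW ⊢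
    linarith
  · -- upper bound
    have := upper_concave hK hK1 (Real.rpow_nonneg ht (2*H)) (Real.rpow_nonneg hs (2*H))
    rw [← hEt, ← hEs] at this
    linarith
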